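/- Let V be uniformly distributed on S^{k−1} with k ≥ 8, and let α ∈ (0,1]. Then for any x ∈ S^{k−1}: P(‖V − x‖₂ ≤ α) ≤ α^{k−1}/√k. -/

import Mathlib

open MeasureTheory Metric

open RealInnerProductSpace Pointwise
open scoped ENNReal

lemma volPiSum (n : ℕ) {r : ℝ} (hr : 0 ≤ r) :
    (volume : Measure (Fin n → ℝ)) {w : Fin n → ℝ | ∑ j, w j ^ 2 ≤ r ^ 2} =
      ENNReal.ofReal (r ^ n) * volume (closedBall (0 : EuclideanSpace ℝ (Fin n)) 1) := by
  have hmp := EuclideanSpace.volume_preserving_symm_measurableEquiv_toLp (Fin n)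
  have hms : MeasurableSet {w : Fin n → ℝ | ∑ j, w j ^ 2 ≤ r ^ 2} := by
    apply measurableSet_le (by fun_prop) (by fun_prop)
  rw [← hmp.measure_preimage hms.nullMeasurableSet]
  have : (MeasurableEquiv.toLp 2 (Fin n → ℝ)).symm ⁻¹' {w : Fin n → ℝ | ∑ j, w j ^ 2 ≤ r ^ 2}
      = closedBall (0 : EuclideanSpace ℝ (Fin n)) r := by
    ext v
    simp only [Set.mem_preimage, Set.mem_setOf_eq, mem_closedBall, dist_zero_right,
      EuclideanSpace.norm_eq, Real.norm_eq_abs, sq_abs, Real.sqrt_le_iff, hr, true_and]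
    rfl
  rw [this, Measure.addHaar_closedBall' _ _ hr, finrank_euclideanSpace_fin]

lemma sqrt_pow_eq_rpow {a : ℝ} (ha : 0 ≤ a) (m : ℕ) :
    Real.sqrt a ^ m = a ^ ((m : ℝ)/2) := by
  rw [Real.sqrt_eq_rpow, ← Real.rpow_natCast (a ^ ((1:ℝ)/2)) m, ← Real.rpow_mul ha]
  ring_nf

lemma intWeighted (n : ℕ) {δ : ℝ} (h0 : 0 ≤ δ) (h1 : δ ≤ 1) :
    ∫ h in δ..1, h * Real.sqrt (1 - h^2) ^ n = Real.sqrt (1 - δ^2) ^ (n+2) / (n+2) := by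
  have hq1 : (1:ℝ) ≤ ((n:ℝ)+2)/2 := by
    have : (0:ℝ) ≤ n := Nat.cast_nonneg n
    linarith
  have hderiv : ∀ h : ℝ, HasDerivAt (fun y : ℝ => -((1 - y^2) ^ (((n:ℝ)+2)/2)) / ((n:ℝ)+2))
      (h * (1 - h^2) ^ ((n:ℝ)/2)) h := by
    intro h
    have hb : HasDerivAt (fun y : ℝ => 1 - y^2) (-(2*h)) h := by
      simpa using ((hasDerivAt_pow 2 h).const_sub 1)
    have h2 := (hb.rpow_const (p := ((n:ℝ)+2)/2) (Or.inr hq1)).neg.div_const ((n:ℝ)+2)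
    convert h2 using 1
    · rfl
    · rfl
    · rfl
    rw [show ((n:ℝ)+2)/2 - 1 = (n:ℝ)/2 by ring]
    field_simp
  have hcont : Continuous fun h : ℝ => h * (1 - h^2) ^ ((n:ℝ)/2) :=
    continuous_id.mul ((continuous_const.sub (continuous_pow 2)).rpow_const
      fun x => Or.inr (by positivity))
  have hcongr : Set.EqOn (fun h : ℝ => h * Real.sqrt (1 - h^2) ^ n)
      (fun h : ℝ => h * (1 - h^2) ^ ((n:ℝ)/2)) (Set.uIcc δ 1) := by
    intro h hh
    rw [Set.uIcc_of_le h1] at hh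
    have hnn : 0 ≤ 1 - h^2 := by nlinarith [hh.1, hh.2]
    simp only
    rw [sqrt_pow_eq_rpow hnn]
  rw [intervalIntegral.integral_congr hcongr,
    intervalIntegral.integral_eq_sub_of_hasDerivAt (fun y _ => hderiv y)
      (hcont.intervalIntegrable _ _)]
  have hdd : 0 ≤ 1 - δ^2 := by nlinarith
  rw [sqrt_pow_eq_rpow hdd]
  have : ((1:ℝ) - 1^2) = 0 := by norm_num
  rw [this, Real.zero_rpow (by positivity)]
  push_cast
  ring


/-- The uniform probability measure on the unit sphere of `ℝᵏ`. -/
noncomputable def unifSphere (k : ℕ) :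
    Measure (sphere (0 : EuclideanSpace ℝ (Fin k)) 1) :=
  (((volume : Measure (EuclideanSpace ℝ (Fin k))).toSphere) Set.univ)⁻¹ •
    (volume : Measure (EuclideanSpace ℝ (Fin k))).toSphere

set_option maxHeartbeats 4000000 in
theorem stmt13 (k : ℕ) (hk : 8 ≤ k) (α : ℝ) (hα : 0 < α) (hα' : α ≤ 1)
    (x : EuclideanSpace ℝ (Fin k)) (hx : ‖x‖ = 1) :
    unifSphere k {v | ‖(v : EuclideanSpace ℝ (Fin k)) - x‖ ≤ α} ≤
      ENNReal.ofReal (α ^ (k - 1) / Real.sqrt k) := by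
  obtain ⟨n, rfl⟩ : ∃ n, k = n + 1 := ⟨k - 1, by omega⟩
  have hn : 7 ≤ n := by omega
  -- real-number setup
  set g : ℝ := Real.sqrt (1 - α^2/4) with hgdef
  set δ : ℝ := 1 - α^2/2 with hδdef
  set ρ : ℝ := α * g with hρdef
  have hα2 : α^2 ≤ 1 := by nlinarith
  have hg2 : g^2 = 1 - α^2/4 := Real.sq_sqrt (by nlinarith)
  have hg0 : 0 ≤ g := Real.sqrt_nonneg _
  have hg1 : g ≤ 1 := by nlinarith
  have hδpos : (0:ℝ) < δ := by simp only [hδdef]; nlinarith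
  have hδge : (2⁻¹:ℝ) ≤ δ := by simp only [hδdef]; nlinarith
  have hδle1 : δ ≤ 1 := by simp only [hδdef]; nlinarith
  have hρ0 : 0 ≤ ρ := mul_nonneg hα.le hg0
  have hρsq : ρ^2 = 1 - δ^2 := by
    simp only [hρdef, hδdef, mul_pow, hg2]; ring
  clear_value g δ ρ
  -- the isometry sending x to e₀
  set e₀ : EuclideanSpace ℝ (Fin (n+1)) := EuclideanSpace.single 0 1 with he₀def
  have he₀ : ‖e₀‖ = 1 := by
    rw [he₀def, EuclideanSpace.norm_single]; norm_num
  set f := (Submodule.reflection (ℝ ∙ (x - e₀))ᗮ) with hfdef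
  have hfx : f x = e₀ := Submodule.reflection_sub (by rw [hx, he₀])
  have hinner : ∀ y : EuclideanSpace ℝ (Fin (n+1)), ⟪x, y⟫ = f y 0 := by
    intro y
    rw [← f.inner_map_map x y, hfx, he₀def, EuclideanSpace.inner_single_left]
    simp
  have hnorm : ∀ y : EuclideanSpace ℝ (Fin (n+1)),
      ‖y‖^2 = (f y 0)^2 + ∑ j, f y (Fin.succAbove 0 j) ^ 2 := by
    intro y
    rw [← f.norm_map y, EuclideanSpace.norm_eq, Real.sq_sqrt (by positivity)]
    simp only [Real.norm_eq_abs, sq_abs]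
    exact Fin.sum_univ_succAbove (fun i => f y i ^ 2) 0
  -- the measure preserving map to the product space
  set Φ : EuclideanSpace ℝ (Fin (n+1)) → ℝ × (Fin n → ℝ) :=
    fun y => (f y 0, fun j => f y (Fin.succAbove 0 j)) with hΦdef
  have hΦ : MeasurePreserving Φ volume volume := by
    have h1 := ((volume_preserving_piFinSuccAbove (fun _ : Fin (n+1) => ℝ) 0).comp
      (EuclideanSpace.volume_preserving_symm_measurableEquiv_toLp (Fin (n+1)))).comp
      f.measurePreserving
    exact h1
  -- the sets
  set S : Set (sphere (0 : EuclideanSpace ℝ (Fin (n+1))) 1) :=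
    {v | ‖(v : EuclideanSpace ℝ (Fin (n+1))) - x‖ ≤ α} with hSdef
  have hSm : MeasurableSet S :=
    (isClosed_le ((continuous_subtype_val.sub continuous_const).norm) continuous_const
      ).measurableSet
  set A' : Set (ℝ × (Fin n → ℝ)) :=
    {p | 0 ≤ p.1 ∧ p.1 ≤ δ ∧ ∑ j, p.2 j ^ 2 ≤ (ρ/δ * p.1)^2} with hA'def
  set B' : Set (ℝ × (Fin n → ℝ)) :=
    {p | δ ≤ p.1 ∧ p.1 ≤ 1 ∧ ∑ j, p.2 j ^ 2 ≤ 1 - p.1^2} with hB'def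
  have hmsum : Measurable fun p : ℝ × (Fin n → ℝ) => ∑ j, p.2 j ^ 2 :=
    Finset.measurable_sum _ fun j _ =>
      ((measurable_pi_apply j).comp measurable_snd).pow_const 2
  have hA'm : MeasurableSet A' := by
    rw [hA'def, Set.setOf_and, Set.setOf_and]
    exact (measurableSet_le measurable_const measurable_fst).inter
      ((measurableSet_le measurable_fst measurable_const).inter
        (measurableSet_le hmsum (by fun_prop)))
  have hB'm : MeasurableSet B' := by
    rw [hB'def, Set.setOf_and, Set.setOf_and]
    exact (measurableSet_le measurable_const measurable_fst).inter
      ((measurableSet_le measurable_fst measurable_const).inter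
        (measurableSet_le hmsum (by fun_prop)))
  -- the inclusion of the cone in the two pieces
  have hsub : (Set.Ioo (0:ℝ) 1) • (Subtype.val '' S) ⊆ Φ ⁻¹' A' ∪ Φ ⁻¹' B' := by
    rintro y hy
    obtain ⟨r, hr, v, hv, rfl⟩ := Set.mem_smul.mp hy
    obtain ⟨u, hu, rfl⟩ := hv
    have hvnorm : ‖(u : EuclideanSpace ℝ (Fin (n+1)))‖ = 1 := by
      simpa using mem_sphere_zero_iff_norm.mp u.2
    set v : EuclideanSpace ℝ (Fin (n+1)) := (u : EuclideanSpace ℝ (Fin (n+1)))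
    have hvx : ‖v - x‖ ≤ α := hu
    have hc : δ ≤ ⟪x, v⟫ := by
      have h1 : ‖v - x‖^2 ≤ α^2 := by
        nlinarith [norm_nonneg (v - x)]
      have h2 : ‖v - x‖^2 = ‖v‖^2 - 2 * ⟪x, v⟫ + ‖x‖^2 := by
        rw [@norm_sub_sq_real, real_inner_comm]
      rw [h2, hvnorm, hx] at h1
      simp only [hδdef]; nlinarith
    have hcle : ⟪x, v⟫ ≤ 1 := by
      have := real_inner_le_norm x v
      rwa [hx, hvnorm, one_mul] at this
    have hiy : ⟪x, r • v⟫ = r * ⟪x, v⟫ := real_inner_smul_right x v r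
    have hf0 : f (r • v) 0 = r * ⟪x, v⟫ := by rw [← hinner, hiy]
    have hynorm : ‖r • v‖^2 = r^2 := by
      rw [norm_smul, hvnorm, mul_one, Real.norm_eq_abs, sq_abs]
    have hSum2 : ∑ j, f (r • v) (Fin.succAbove 0 j) ^ 2 = r^2 - (r * ⟪x, v⟫)^2 := by
      have := hnorm (r • v)
      rw [hynorm, hf0] at this
      linarith
    rcases le_or_gt δ (r * ⟪x, v⟫) with hcase | hcase
    · right
      simp only [Set.mem_preimage, hB'def, Set.mem_setOf_eq, hΦdef, hf0, hSum2]
      refine ⟨hcase, ?_, ?_⟩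
      · nlinarith [hr.1, hr.2, hc, hδpos]
      · nlinarith [hr.1, hr.2]
    · left
      simp only [Set.mem_preimage, hA'def, Set.mem_setOf_eq, hΦdef, hf0, hSum2]
      have hrc0 : 0 ≤ r * ⟪x, v⟫ := by nlinarith [hr.1, hδpos, hc]
      refine ⟨hrc0, hcase.le, ?_⟩
      have hkey : δ^2 * (1 - ⟪x, v⟫^2) ≤ (1 - δ^2) * ⟪x, v⟫^2 := by
        nlinarith [hc, hδpos]
      have hρδ : (ρ/δ * (r * ⟪x, v⟫))^2 = (1 - δ^2)/δ^2 * (r^2 * ⟪x, v⟫^2) := by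
        rw [mul_pow, div_pow, hρsq]; ring
      rw [hρδ, div_mul_eq_mul_div, le_div_iff₀ (by positivity)]
      nlinarith [mul_le_mul_of_nonneg_left hkey (sq_nonneg r)]
  set ω := volume (closedBall (0 : EuclideanSpace ℝ (Fin n)) 1) with hωdef
  have hsliceA : ∀ h : ℝ, (volume : Measure (Fin n → ℝ)) (Prod.mk h ⁻¹' A') =
      Set.indicator (Set.Icc 0 δ) (fun h => ENNReal.ofReal ((ρ/δ*h)^n) * ω) h := by
    intro h
    by_cases hh : h ∈ Set.Icc 0 δ
    · rw [Set.indicator_of_mem hh]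
      have hpre : Prod.mk h ⁻¹' A' = {w : Fin n → ℝ | ∑ j, w j ^ 2 ≤ (ρ/δ*h)^2} := by
        ext w
        simp only [Set.mem_preimage, hA'def, Set.mem_setOf_eq]
        exact ⟨fun hw => hw.2.2, fun hw => ⟨hh.1, hh.2, hw⟩⟩
      rw [hpre, volPiSum n (mul_nonneg (div_nonneg hρ0 hδpos.le) hh.1)]
    · rw [Set.indicator_of_notMem hh]
      have hpre : Prod.mk h ⁻¹' A' = ∅ := by
        ext w
        simp only [Set.mem_preimage, hA'def, Set.mem_setOf_eq, Set.mem_empty_iff_false,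
          iff_false]
        rintro ⟨h1, h2, -⟩
        have := (by simpa [Set.mem_Icc] using hh : 0 ≤ h → δ < h)
        exact absurd h2 (not_le.mpr (this h1))
      simp [hpre]
  have hvolA : volume (Φ ⁻¹' A') = ENNReal.ofReal (ρ^n * δ / (n+1)) * ω := by
    rw [hΦ.measure_preimage hA'm.nullMeasurableSet, Measure.volume_eq_prod,
      Measure.prod_apply hA'm, lintegral_congr hsliceA,
      lintegral_indicator measurableSet_Icc,
      lintegral_mul_const _ (by fun_prop),
      ← ofReal_integral_eq_lintegral_ofReal]
    · congr 2
      rw [MeasureTheory.integral_Icc_eq_integral_Ioc,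
        ← intervalIntegral.integral_of_le hδpos.le]
      simp_rw [mul_pow (ρ/δ)]
      rw [intervalIntegral.integral_const_mul, integral_pow, div_pow,
        zero_pow (Nat.succ_ne_zero n)]
      push_cast
      field_simp
      ring
    · exact (Continuous.integrableOn_Icc (by fun_prop))
    · filter_upwards [ae_restrict_mem measurableSet_Icc] with h hh
      have := hh.1
      positivity
  have hsliceB : ∀ h : ℝ, (volume : Measure (Fin n → ℝ)) (Prod.mk h ⁻¹' B') =
      Set.indicator (Set.Icc δ 1) (fun h => ENNReal.ofReal (Real.sqrt (1-h^2)^n) * ω) h := by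
    intro h
    by_cases hh : h ∈ Set.Icc δ 1
    · rw [Set.indicator_of_mem hh]
      have h1 : 0 ≤ 1 - h^2 := by nlinarith [hh.1, hh.2, hδpos]
      have hpre : Prod.mk h ⁻¹' B' = {w : Fin n → ℝ | ∑ j, w j ^ 2 ≤ (Real.sqrt (1-h^2))^2} := by
        ext w
        simp only [Set.mem_preimage, hB'def, Set.mem_setOf_eq, Real.sq_sqrt h1]
        exact ⟨fun hw => hw.2.2, fun hw => ⟨hh.1, hh.2, hw⟩⟩
      rw [hpre, volPiSum n (Real.sqrt_nonneg _)]
    · rw [Set.indicator_of_notMem hh]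
      have hpre : Prod.mk h ⁻¹' B' = ∅ := by
        ext w
        simp only [Set.mem_preimage, hB'def, Set.mem_setOf_eq, Set.mem_empty_iff_false,
          iff_false]
        rintro ⟨h1, h2, -⟩
        have := (by simpa [Set.mem_Icc] using hh : δ ≤ h → 1 < h)
        exact absurd h2 (not_le.mpr (this h1))
      simp [hpre]
  have hsqrtρ : Real.sqrt (1 - δ^2) = ρ := by rw [← hρsq, Real.sqrt_sq hρ0]
  have hcontB : Continuous fun h : ℝ => h/δ * Real.sqrt (1-h^2)^n :=
    (continuous_id.div_const δ).mul
      ((Real.continuous_sqrt.comp (continuous_const.sub (continuous_pow 2))).pow n)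
  have hvolB : volume (Φ ⁻¹' B') ≤ ENNReal.ofReal (ρ^(n+2) / ((n+2) * δ)) * ω := by
    rw [hΦ.measure_preimage hB'm.nullMeasurableSet, Measure.volume_eq_prod,
      Measure.prod_apply hB'm, lintegral_congr hsliceB,
      lintegral_indicator measurableSet_Icc,
      lintegral_mul_const _ (by fun_prop)]
    have hmono : ∫⁻ h in Set.Icc δ 1, ENNReal.ofReal (Real.sqrt (1-h^2)^n)
        ≤ ∫⁻ h in Set.Icc δ 1, ENNReal.ofReal (h/δ * Real.sqrt (1-h^2)^n) := by
      refine setLIntegral_mono' measurableSet_Icc fun h hh => ?_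
      apply ENNReal.ofReal_le_ofReal
      have h1 : (1:ℝ) ≤ h/δ := (one_le_div hδpos).mpr hh.1
      have h2 : (0:ℝ) ≤ Real.sqrt (1-h^2)^n := by positivity
      nlinarith
    refine le_trans (mul_le_mul_left hmono ω) ?_
    rw [← ofReal_integral_eq_lintegral_ofReal (hcontB.integrableOn_Icc)]
    · apply mul_le_mul_left
      apply ENNReal.ofReal_le_ofReal
      rw [MeasureTheory.integral_Icc_eq_integral_Ioc,
        ← intervalIntegral.integral_of_le hδle1]
      simp_rw [div_mul_eq_mul_div]
      rw [intervalIntegral.integral_div, intWeighted n hδpos.le hδle1, hsqrtρ,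
        div_div]
    · filter_upwards [ae_restrict_mem measurableSet_Icc] with h hh
      have h1 : (0:ℝ) < h := lt_of_lt_of_le hδpos hh.1
      positivity
  -- lower bound for the volume of the unit ball
  set s : ℝ := (Real.sqrt ((n:ℝ)+1))⁻¹ with hsdef
  have hs1 : (0:ℝ) < Real.sqrt ((n:ℝ)+1) := Real.sqrt_pos.mpr (by positivity)
  have hsn : (1:ℝ) ≤ Real.sqrt ((n:ℝ)+1) := by
    nlinarith [Real.sq_sqrt (show (0:ℝ) ≤ (n:ℝ)+1 by positivity),
      Real.sqrt_nonneg ((n:ℝ)+1), show (0:ℝ) ≤ (n:ℝ) from Nat.cast_nonneg n]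
  have hspos : 0 < s := inv_pos.mpr hs1
  have hsq : s^2 = ((n:ℝ)+1)⁻¹ := by
    rw [hsdef, inv_pow, Real.sq_sqrt (by positivity)]
  have hsle1 : s ≤ 1 := by
    have hmul : s * Real.sqrt ((n:ℝ)+1) = 1 := inv_mul_cancel₀ hs1.ne'
    nlinarith
  set r₀ : ℝ := Real.sqrt (1 - s^2) with hr₀def
  have hr₀sq : r₀^2 = 1 - s^2 := Real.sq_sqrt (by nlinarith)
  have hr₀0 : 0 ≤ r₀ := Real.sqrt_nonneg _
  have hr₀n : (1:ℝ)/2 ≤ r₀^n := by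
    have hn0 : (0:ℝ) < n := by
      have : (7:ℝ) ≤ n := by exact_mod_cast hn
      linarith
    have e1 : (1 + 1/(n:ℝ))^n ≤ 4 := by
      have he := Real.add_one_le_exp (1/(n:ℝ))
      calc (1 + 1/(n:ℝ))^n ≤ Real.exp (1/(n:ℝ)) ^ n := by
            apply pow_le_pow_left₀ (by positivity)
            linarith
        _ = Real.exp ((n:ℝ) * (1/(n:ℝ))) := (Real.exp_nat_mul _ n).symm
        _ = Real.exp 1 := by rw [mul_one_div, div_self hn0.ne']
        _ ≤ 4 := by linarith [Real.exp_one_lt_d9]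
    have e2 : ((n:ℝ)/((n:ℝ)+1))^n * ((1 + 1/(n:ℝ))^n) = 1 := by
      rw [← mul_pow, show (n:ℝ)/((n:ℝ)+1) * (1 + 1/(n:ℝ)) = 1 from by field_simp,
        one_pow]
    have e3 : (1:ℝ)/4 ≤ ((n:ℝ)/((n:ℝ)+1))^n := by
      nlinarith [pow_pos (show (0:ℝ) < (n:ℝ)/((n:ℝ)+1) from by positivity) n]
    have e4 : (r₀^n)^2 = ((n:ℝ)/((n:ℝ)+1))^n := by
      rw [← pow_mul, mul_comm, pow_mul, hr₀sq, hsq]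
      congr 1
      field_simp
      ring
    nlinarith [pow_nonneg hr₀0 n]
  clear_value s r₀
  have hmsum' : Measurable fun w : Fin n → ℝ => ∑ j, w j ^ 2 :=
    Finset.measurable_sum _ fun j _ => (measurable_pi_apply j).pow_const 2
  have hrectm : MeasurableSet (Set.Icc (-s) s ×ˢ {w : Fin n → ℝ | ∑ j, w j ^ 2 ≤ r₀^2}) :=
    measurableSet_Icc.prod (measurableSet_le hmsum' measurable_const)
  have hRect : Φ ⁻¹' (Set.Icc (-s) s ×ˢ {w : Fin n → ℝ | ∑ j, w j ^ 2 ≤ r₀^2}) ⊆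
      closedBall (0 : EuclideanSpace ℝ (Fin (n+1))) 1 := by
    intro y hy
    simp only [Set.mem_preimage, Set.mem_prod, Set.mem_Icc, Set.mem_setOf_eq, hΦdef] at hy
    obtain ⟨⟨hy1, hy2⟩, hy3⟩ := hy
    rw [mem_closedBall_zero_iff]
    have h1 : (f y 0)^2 ≤ s^2 := sq_le_sq' hy1 hy2
    rw [hr₀sq] at hy3
    have h2 : ‖y‖^2 ≤ 1 := by rw [hnorm y]; linarith
    nlinarith [norm_nonneg y]
  haveI : Nontrivial (EuclideanSpace ℝ (Fin (n+1))) := by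
    refine ⟨x, 0, fun hc => ?_⟩
    rw [hc, norm_zero] at hx
    norm_num at hx
  have hball : ENNReal.ofReal s * ω ≤
      volume (ball (0 : EuclideanSpace ℝ (Fin (n+1))) 1) := by
    rw [← Measure.addHaar_closedBall_eq_addHaar_ball]
    have h1 : volume (Φ ⁻¹' (Set.Icc (-s) s ×ˢ {w : Fin n → ℝ | ∑ j, w j ^ 2 ≤ r₀^2}))
        ≤ volume (closedBall (0 : EuclideanSpace ℝ (Fin (n+1))) 1) := measure_mono hRect
    rw [hΦ.measure_preimage hrectm.nullMeasurableSet, Measure.volume_eq_prod,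
      Measure.prod_prod, Real.volume_Icc, volPiSum n hr₀0] at h1
    refine le_trans ?_ h1
    rw [show s - (-s) = 2*s from by ring, ← mul_assoc,
      ← ENNReal.ofReal_mul (by positivity)]
    apply mul_le_mul_left
    exact ENNReal.ofReal_le_ofReal (by nlinarith [hr₀n, hspos])
  -- the key real inequality
  have hNle : ρ^n * δ / ((n:ℝ)+1) + ρ^(n+2) / (((n:ℝ)+2)*δ) ≤ α^n / ((n:ℝ)+1) := by
    have hgn : g^n ≤ δ := by
      have h6 : g^n ≤ g^6 := pow_le_pow_of_le_one hg0 hg1 (by omega)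
      have h7 : g^6 = (1 - α^2/4)^3 := by
        rw [show 6 = 2*3 from rfl, pow_mul, hg2]
      rw [h7] at h6
      have hu : (0:ℝ) ≤ α^2 := sq_nonneg α
      have hfac : (0:ℝ) ≤ 16 - 12*α^2 + (α^2)^2 := by nlinarith
      have h8 : (1 - α^2/4)^3 ≤ 1 - α^2/2 := by nlinarith [mul_nonneg hu hfac]
      simp only [hδdef]
      linarith
    have hρn : ρ^n ≤ α^n * δ := by
      rw [hρdef, mul_pow]
      exact mul_le_mul_of_nonneg_left hgn (pow_nonneg hα.le n)
    have hδ2 : (0:ℝ) ≤ 1 - δ^2 := by nlinarith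
    have e1 : ρ^(n+2) = ρ^n * (1 - δ^2) := by rw [pow_add, hρsq]
    have hcast : (0:ℝ) ≤ (n:ℝ) := Nat.cast_nonneg n
    have h2 : ρ^(n+2) / (((n:ℝ)+2)*δ) ≤ ρ^(n+2) / (((n:ℝ)+1)*δ) := by
      apply div_le_div_of_nonneg_left (pow_nonneg hρ0 _) (by positivity)
      nlinarith
    have h3 : ρ^n * δ / ((n:ℝ)+1) + ρ^n * (1 - δ^2) / (((n:ℝ)+1)*δ)
        = ρ^n / (((n:ℝ)+1)*δ) := by
      field_simp [hδpos.ne']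
      ring
    have h4 : ρ^n / (((n:ℝ)+1)*δ) ≤ α^n / ((n:ℝ)+1) := by
      rw [div_le_div_iff₀ (by positivity) (by positivity)]
      have h5a := mul_le_mul_of_nonneg_right hρn (show (0:ℝ) ≤ (n:ℝ)+1 by positivity)
      have h5b : α^n * δ * ((n:ℝ)+1) = α^n * (((n:ℝ)+1)*δ) := by ring
      linarith only [h5a, h5b.le, h5b.ge]
    calc ρ^n * δ / ((n:ℝ)+1) + ρ^(n+2) / (((n:ℝ)+2)*δ)
        ≤ ρ^n * δ / ((n:ℝ)+1) + ρ^(n+2) / (((n:ℝ)+1)*δ) := by linarith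
      _ = ρ^n * δ / ((n:ℝ)+1) + ρ^n * (1 - δ^2) / (((n:ℝ)+1)*δ) := by rw [e1]
      _ = ρ^n / (((n:ℝ)+1)*δ) := h3
      _ ≤ α^n / ((n:ℝ)+1) := h4
  -- assembling the volume bound for the cone
  have hss : Real.sqrt ((n:ℝ)+1) * Real.sqrt ((n:ℝ)+1) = (n:ℝ)+1 :=
    Real.mul_self_sqrt (by positivity)
  have hSvol : volume ((Set.Ioo (0:ℝ) 1) • (Subtype.val '' S)) ≤
      ENNReal.ofReal (α^n / Real.sqrt ((n:ℝ)+1)) *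
        volume (ball (0 : EuclideanSpace ℝ (Fin (n+1))) 1) := by
    calc volume ((Set.Ioo (0:ℝ) 1) • (Subtype.val '' S))
        ≤ volume (Φ ⁻¹' A' ∪ Φ ⁻¹' B') := measure_mono hsub
      _ ≤ volume (Φ ⁻¹' A') + volume (Φ ⁻¹' B') := measure_union_le _ _
      _ ≤ ENNReal.ofReal (ρ^n * δ / ((n:ℝ)+1)) * ω
          + ENNReal.ofReal (ρ^(n+2) / (((n:ℝ)+2)*δ)) * ω := by
          rw [hvolA]
          exact add_le_add_right hvolB _
      _ = ENNReal.ofReal (ρ^n * δ / ((n:ℝ)+1) + ρ^(n+2) / (((n:ℝ)+2)*δ)) * ω := by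
          rw [← add_mul, ← ENNReal.ofReal_add (by positivity) (by positivity)]
      _ ≤ ENNReal.ofReal (α^n / ((n:ℝ)+1)) * ω :=
          mul_le_mul_left (ENNReal.ofReal_le_ofReal hNle) ω
      _ = ENNReal.ofReal (α^n / Real.sqrt ((n:ℝ)+1)) * (ENNReal.ofReal s * ω) := by
          rw [← mul_assoc, ← ENNReal.ofReal_mul (by positivity)]
          congr 2
          rw [hsdef, div_eq_mul_inv, div_eq_mul_inv, mul_assoc, ← mul_inv, hss]
      _ ≤ ENNReal.ofReal (α^n / Real.sqrt ((n:ℝ)+1)) *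
            volume (ball (0 : EuclideanSpace ℝ (Fin (n+1))) 1) :=
          mul_le_mul_right hball _
  -- final assembly
  have hb0 : volume (ball (0 : EuclideanSpace ℝ (Fin (n+1))) 1) ≠ 0 :=
    (measure_ball_pos volume _ one_pos).ne'
  have hbt : volume (ball (0 : EuclideanSpace ℝ (Fin (n+1))) 1) ≠ ⊤ :=
    measure_ball_lt_top.ne
  have hk0 : ((n+1 : ℕ) : ℝ≥0∞) ≠ 0 := by
    simp
  have hkt : ((n+1 : ℕ) : ℝ≥0∞) ≠ ⊤ := ENNReal.natCast_ne_top _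
  have hgoalcast : ENNReal.ofReal (α ^ (n + 1 - 1) / Real.sqrt ((n+1 : ℕ) : ℝ))
      = ENNReal.ofReal (α^n / Real.sqrt ((n:ℝ)+1)) := by
    congr 2 <;> push_cast <;> ring_nf
  rw [unifSphere, Measure.smul_apply, smul_eq_mul,
    Measure.toSphere_apply' _ hSm, Measure.toSphere_apply_univ,
    finrank_euclideanSpace_fin, hgoalcast]
  calc (((n+1 : ℕ) : ℝ≥0∞) * volume (ball (0 : EuclideanSpace ℝ (Fin (n+1))) 1))⁻¹ *
        (((n+1 : ℕ) : ℝ≥0∞) * volume ((Set.Ioo (0:ℝ) 1) • (Subtype.val '' S)))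
      = volume ((Set.Ioo (0:ℝ) 1) • (Subtype.val '' S)) *
          (volume (ball (0 : EuclideanSpace ℝ (Fin (n+1))) 1))⁻¹ := by
        rw [ENNReal.mul_inv (Or.inl hk0) (Or.inl hkt)]
        rw [show (((n+1 : ℕ) : ℝ≥0∞))⁻¹ *
            (volume (ball (0 : EuclideanSpace ℝ (Fin (n+1))) 1))⁻¹ *
            (((n+1 : ℕ) : ℝ≥0∞) * volume ((Set.Ioo (0:ℝ) 1) • (Subtype.val '' S)))
          = (((n+1 : ℕ) : ℝ≥0∞))⁻¹ * ((n+1 : ℕ) : ℝ≥0∞) *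
            (volume ((Set.Ioo (0:ℝ) 1) • (Subtype.val '' S)) *
              (volume (ball (0 : EuclideanSpace ℝ (Fin (n+1))) 1))⁻¹) from by ring]
        rw [ENNReal.inv_mul_cancel hk0 hkt, one_mul]
    _ ≤ (ENNReal.ofReal (α^n / Real.sqrt ((n:ℝ)+1)) *
          volume (ball (0 : EuclideanSpace ℝ (Fin (n+1))) 1)) *
          (volume (ball (0 : EuclideanSpace ℝ (Fin (n+1))) 1))⁻¹ :=
        mul_le_mul_left hSvol _
    _ = ENNReal.ofReal (α^n / Real.sqrt ((n:ℝ)+1)) *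
          (volume (ball (0 : EuclideanSpace ℝ (Fin (n+1))) 1) *
            (volume (ball (0 : EuclideanSpace ℝ (Fin (n+1))) 1))⁻¹) := by
        rw [mul_assoc]
    _ = ENNReal.ofReal (α^n / Real.sqrt ((n:ℝ)+1)) := by
        rw [ENNReal.mul_inv_cancel hb0 hbt, mul_one]
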